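/- Let G = (B,ψ,A) be a quantum graph with δ-form ψ and completely positive quantum adjacency matrix A, and E_G = B·ε_G·B its quantum edge correspondence inside B⊗_ψ B. Suppose A is a homomorphism. Then for all x,y ∈ B, (xy)·ε_G = x·ε_G·A(y). -/

import Mathlib

open scoped TensorProduct
open TensorProduct

noncomputable section


open scoped TensorProduct
open TensorProduct

noncomputable section

variable {B : Type*} [Ring B] [StarRing B] [Algebra ℂ B] [StarModule ℂ B]
  [Module.Finite ℂ B] [Module.Free ℂ B]

/-- The multiplication map `m : B ⊗ B → B`. -/
abbrev mulMap (B : Type*) [Ring B] [Algebra ℂ B] : B ⊗[ℂ] B →ₗ[ℂ] B := LinearMap.mul' ℂ B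

/-- `ψ ⊗ ψ` as a functional on `B ⊗ B`. -/
def psi2 (ψ : B →ₗ[ℂ] ℂ) : B ⊗[ℂ] B →ₗ[ℂ] ℂ :=
  (TensorProduct.lid ℂ ℂ).toLinearMap ∘ₗ TensorProduct.map ψ ψ

/-- `ψ ⊗ id : B ⊗ B → B`. -/
def psiOne (ψ : B →ₗ[ℂ] ℂ) : B ⊗[ℂ] B →ₗ[ℂ] B :=
  (TensorProduct.lid ℂ B).toLinearMap ∘ₗ TensorProduct.map ψ LinearMap.id

/-- `ψ` is a faithful state. -/
def IsState (ψ : B →ₗ[ℂ] ℂ) : Prop :=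
  ψ 1 = 1 ∧ (∀ x : B, 0 ≤ (ψ (star x * x)).re ∧ (ψ (star x * x)).im = 0) ∧
    ∀ x : B, ψ (star x * x) = 0 → x = 0

/-- `mstar` is the adjoint of multiplication w.r.t. the GNS inner products of `ψ`:
`⟪y ⊗ z, m*(x)⟫_{ψ⊗ψ} = ⟪y * z, x⟫_ψ`. -/
def IsAdjointMul (ψ : B →ₗ[ℂ] ℂ) (mstar : B →ₗ[ℂ] B ⊗[ℂ] B) : Prop :=
  ∀ x y z : B, psi2 ψ ((star y ⊗ₜ[ℂ] star z) * mstar x) = ψ (star (y * z) * x)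

/-- `ψ` is a `δ`-form: `m m* = δ² id`. -/
def IsDeltaForm (mstar : B →ₗ[ℂ] B ⊗[ℂ] B) (δ : ℝ) : Prop :=
  ∀ x : B, mulMap B (mstar x) = ((δ : ℂ)^2) • x

/-- `A` is a quantum adjacency matrix: `m (A ⊗ A) m* = δ² A`. -/
def IsQAdj (mstar : B →ₗ[ℂ] B ⊗[ℂ] B) (δ : ℝ) (A : B →ₗ[ℂ] B) : Prop :=
  ∀ x : B, mulMap B (TensorProduct.map A A (mstar x)) = ((δ : ℂ)^2) • A x

/-- The quantum edge indicator `ε = (1/δ²)(1 ⊗ A) m*(1)`. -/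
def edgeInd (mstar : B →ₗ[ℂ] B ⊗[ℂ] B) (δ : ℝ) (A : B →ₗ[ℂ] B) : B ⊗[ℂ] B :=
  (((δ : ℂ)^2)⁻¹) • (LinearMap.lTensor B A) (mstar 1)

/-- The `#`-multiplication on `B ⊗ B`: `(a⊗b)#(c⊗d) = (ac)⊗(db)` (i.e. `B ⊗ Bᵒᵖ`). -/
def hashMul (ξ η : B ⊗[ℂ] B) : B ⊗[ℂ] B :=
  (TensorProduct.congr (LinearEquiv.refl ℂ B) (MulOpposite.opLinearEquiv ℂ (M := B))).symm
    ((TensorProduct.congr (LinearEquiv.refl ℂ B) (MulOpposite.opLinearEquiv ℂ (M := B))) ξ *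
      (TensorProduct.congr (LinearEquiv.refl ℂ B) (MulOpposite.opLinearEquiv ℂ (M := B))) η)

/-- The (conjugate-linear) star operation on `B ⊗ B`, `star (a ⊗ b) = star a ⊗ star b`,
defined via a choice of basis. -/
def starT (ξ : B ⊗[ℂ] B) : B ⊗[ℂ] B :=
  ∑ p : Module.Free.ChooseBasisIndex ℂ B × Module.Free.ChooseBasisIndex ℂ B,
    (starRingEnd ℂ)
      (((Module.Free.chooseBasis ℂ B).tensorProduct (Module.Free.chooseBasis ℂ B)).repr ξ p) •
      (star ((Module.Free.chooseBasis ℂ B) p.1) ⊗ₜ[ℂ] star ((Module.Free.chooseBasis ℂ B) p.2))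

/-- The `B`-valued inner product on `B ⊗ B`: `⟨a⊗b, c⊗d⟩_B = ψ(a*c) b* d`. -/
def bip (ψ : B →ₗ[ℂ] ℂ) (ξ η : B ⊗[ℂ] B) : B := psiOne ψ (starT ξ * η)

/-- Positivity in a star ring. -/
def IsPosEl {R : Type*} [Ring R] [StarRing R] (x : R) : Prop := ∃ y, x = star y * y

/-- Complete positivity of a linear map on `B`. -/
def IsCP (A : B →ₗ[ℂ] B) : Prop :=
  ∀ (n : ℕ) (M : Matrix (Fin n) (Fin n) B), IsPosEl M → IsPosEl (M.map A)

/-- The map `A_ξ : x ↦ δ² (ψ ⊗ 1)(x · ξ)`. -/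
def Axi (ψ : B →ₗ[ℂ] ℂ) (δ : ℝ) (ξ : B ⊗[ℂ] B) : B →ₗ[ℂ] B :=
  ((δ : ℂ)^2) • ((psiOne ψ) ∘ₗ ((LinearMap.mul ℂ (B ⊗[ℂ] B)).flip ξ) ∘ₗ
    (Algebra.TensorProduct.includeLeft : B →ₐ[ℂ] B ⊗[ℂ] B).toLinearMap)

/-- The quantum edge correspondence `E_G = B · ε_G · B` as a subspace of `B ⊗ B`. -/
def EGspan (mstar : B →ₗ[ℂ] B ⊗[ℂ] B) (δ : ℝ) (A : B →ₗ[ℂ] B) : Submodule ℂ (B ⊗[ℂ] B) :=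
  Submodule.span ℂ
    {z : B ⊗[ℂ] B | ∃ x y : B, z = (x ⊗ₜ[ℂ] (1 : B)) * edgeInd mstar δ A * ((1 : B) ⊗ₜ[ℂ] y)}


section helpers

variable {B : Type*} [Ring B] [StarRing B] [Algebra ℂ B] [StarModule ℂ B]
  [Module.Finite ℂ B] [Module.Free ℂ B]

lemma psi2_tmul (ψ : B →ₗ[ℂ] ℂ) (a b : B) : psi2 ψ (a ⊗ₜ[ℂ] b) = ψ a * ψ b := by
  simp [psi2]

lemma psi_star (ψ : B →ₗ[ℂ] ℂ) (hψ : IsState ψ) (a : B) :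
    ψ (star a) = (starRingEnd ℂ) (ψ a) := by
  obtain ⟨h1, h2, _⟩ := hψ
  have key : ∀ x : B, (ψ (star x * x)).im = 0 := fun x => (h2 x).2
  have e1 : star (a + 1) * (a + 1) = star a * a + (star a + (a + (1 : B))) := by
    rw [star_add, star_one]; noncomm_ring
  have e2 : star (a + Complex.I • (1 : B)) * (a + Complex.I • (1 : B))
      = star a * a + (Complex.I • star a + ((-Complex.I) • a + (1 : B))) := by
    rw [star_add, star_smul, star_one]
    rw [show star Complex.I = -Complex.I by simp [Complex.ext_iff]]
    rw [mul_add, add_mul, add_mul, smul_mul_assoc, smul_mul_assoc, mul_smul_comm,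
      mul_one, one_mul, one_mul, smul_smul]
    norm_num [Complex.I_mul_I]
    abel
  have H1 : (ψ (star a)).im + (ψ a).im = 0 := by
    have h := key (a + 1)
    rw [e1] at h
    simp only [map_add, h1, Complex.add_im, Complex.one_im, key a] at h
    linarith
  have H2 : (ψ (star a)).re = (ψ a).re := by
    have h := key (a + Complex.I • (1 : B))
    rw [e2] at h
    simp only [map_add, map_smul, h1, smul_eq_mul, Complex.add_im, Complex.mul_im,
      Complex.I_re, Complex.I_im, Complex.neg_re, Complex.neg_im, Complex.one_im,
      key a] at h
    simp at h
    linarith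
  apply Complex.ext
  · simpa [Complex.conj_re] using H2
  · simp only [Complex.conj_im]
    linarith

lemma psi_faithful_right (ψ : B →ₗ[ℂ] ℂ) (hψ : IsState ψ) (c : B)
    (h : ∀ b : B, ψ (b * c) = 0) : c = 0 :=
  hψ.2.2 c (h (star c))

lemma exists_onb (ψ : B →ₗ[ℂ] ℂ) (hψ : IsState ψ) :
    ∃ (n : ℕ) (f : Module.Basis (Fin n) ℂ B),
      ∀ i j, ψ (star (f i) * f j) = if i = j then 1 else 0 := by
  let core : InnerProductSpace.Core ℂ B :=
  { inner := fun x y => ψ (star x * y)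
    conj_inner_symm := by
      intro x y
      show (starRingEnd ℂ) (ψ (star y * x)) = ψ (star x * y)
      rw [← psi_star ψ hψ, star_mul, star_star]
    re_inner_nonneg := fun x => by simpa using (hψ.2.1 x).1
    definite := fun x hx => hψ.2.2 x hx
    add_left := by intro x y z; show ψ _ = ψ _ + ψ _; rw [star_add, add_mul, map_add]
    smul_left := by
      intro x y r
      show ψ (star (r • x) * y) = (starRingEnd ℂ) r * ψ (star x * y)
      rw [star_smul, smul_mul_assoc, map_smul, smul_eq_mul]
      rfl }
  letI : NormedAddCommGroup B := core.toNormedAddCommGroup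
  letI : InnerProductSpace ℂ B := InnerProductSpace.ofCore core.toCore
  haveI : FiniteDimensional ℂ B := inferInstance
  let ob := stdOrthonormalBasis ℂ B
  refine ⟨_, ob.toBasis, fun i j => ?_⟩
  have h := orthonormal_iff_ite.mp ob.orthonormal i j
  simp only [OrthonormalBasis.coe_toBasis]
  exact h

lemma coord_eq (ψ : B →ₗ[ℂ] ℂ) {n : ℕ} (f : Module.Basis (Fin n) ℂ B)
    (horth : ∀ i j, ψ (star (f i) * f j) = if i = j then 1 else 0)
    (v : B) (j : Fin n) : ψ (star (f j) * v) = f.repr v j := by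
  conv_lhs => rw [← f.sum_repr v]
  rw [Finset.mul_sum, map_sum]
  simp only [mul_smul_comm, map_smul, smul_eq_mul, horth]
  simp

lemma tensor_decomp {n : ℕ} (f : Module.Basis (Fin n) ℂ B) (ξ : B ⊗[ℂ] B) :
    ξ = ∑ i, f i ⊗ₜ[ℂ] ((TensorProduct.lid ℂ B) ((LinearMap.rTensor B (f.coord i)) ξ)) := by
  have h : (LinearMap.id : B ⊗[ℂ] B →ₗ[ℂ] B ⊗[ℂ] B)
      = ∑ i, (TensorProduct.mk ℂ B B (f i)) ∘ₗ
          ((TensorProduct.lid ℂ B).toLinearMap ∘ₗ (LinearMap.rTensor B (f.coord i))) := by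
    apply TensorProduct.ext'
    intro a b
    simp only [LinearMap.id_coe, id_eq, LinearMap.sum_apply, LinearMap.coe_comp,
      LinearEquiv.coe_coe, Function.comp_apply, LinearMap.rTensor_tmul,
      TensorProduct.lid_tmul, TensorProduct.mk_apply]
    have heach : ∀ i : Fin n, f i ⊗ₜ[ℂ] ((f.coord i) a • b)
        = ((f.coord i) a • f i) ⊗ₜ[ℂ] b := by
      intro i
      rw [TensorProduct.tmul_smul, TensorProduct.smul_tmul']
    rw [Finset.sum_congr rfl fun i _ => heach i, ← TensorProduct.sum_tmul]
    congr 1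
    exact (f.sum_repr a).symm
  have h2 := DFunLike.congr_fun h ξ
  simpa using h2

lemma tensor_nondeg (ψ : B →ₗ[ℂ] ℂ) (hψ : IsState ψ) {n : ℕ} (f : Module.Basis (Fin n) ℂ B)
    (horth : ∀ i j, ψ (star (f i) * f j) = if i = j then 1 else 0)
    (ξ : B ⊗[ℂ] B) (h : ∀ a b : B, psi2 ψ ((a ⊗ₜ[ℂ] b) * ξ) = 0) : ξ = 0 := by
  have hdec := tensor_decomp f ξ
  have hc : ∀ j, (TensorProduct.lid ℂ B) ((LinearMap.rTensor B (f.coord j)) ξ) = 0 := by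
    intro j
    apply psi_faithful_right ψ hψ
    intro b
    have h0 := h (star (f j)) b
    conv at h0 => rw [hdec]
    rw [Finset.mul_sum, map_sum] at h0
    have h1 : ∀ i : Fin n, psi2 ψ ((star (f j) ⊗ₜ[ℂ] b) *
          (f i ⊗ₜ[ℂ] ((TensorProduct.lid ℂ B) ((LinearMap.rTensor B (f.coord i)) ξ))))
        = if j = i then ψ (b * (TensorProduct.lid ℂ B) ((LinearMap.rTensor B (f.coord i)) ξ))
          else 0 := by
      intro i
      rw [Algebra.TensorProduct.tmul_mul_tmul, psi2_tmul, horth, ite_mul, one_mul, zero_mul]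
    rw [Finset.sum_congr rfl fun i _ => h1 i] at h0
    simpa using h0
  conv_lhs => rw [hdec]
  simp [hc]

lemma mstar_pair (ψ : B →ₗ[ℂ] ℂ) (mstar : B →ₗ[ℂ] B ⊗[ℂ] B)
    (hadj : IsAdjointMul ψ mstar) (a b x : B) :
    psi2 ψ ((a ⊗ₜ[ℂ] b) * mstar x) = ψ (b * a * x) := by
  have h := hadj x (star a) (star b)
  simpa [star_star, star_mul] using h

lemma mstar_formula (ψ : B →ₗ[ℂ] ℂ) (hψ : IsState ψ)
    (mstar : B →ₗ[ℂ] B ⊗[ℂ] B) (hadj : IsAdjointMul ψ mstar)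
    {n : ℕ} (f : Module.Basis (Fin n) ℂ B)
    (horth : ∀ i j, ψ (star (f i) * f j) = if i = j then 1 else 0) (x : B) :
    mstar x = ∑ i, f i ⊗ₜ[ℂ] (star (f i) * x) := by
  have hsub : ∀ a b : B,
      psi2 ψ ((a ⊗ₜ[ℂ] b) * (mstar x - ∑ i, f i ⊗ₜ[ℂ] (star (f i) * x))) = 0 := by
    intro a b
    rw [mul_sub, map_sub, mstar_pair ψ mstar hadj, Finset.mul_sum, map_sum]
    simp only [Algebra.TensorProduct.tmul_mul_tmul, psi2_tmul]
    have hsa : (∑ i, ψ (a * f i) • star (f i)) = a := by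
      apply star_injective
      rw [star_sum]
      have heach : ∀ i : Fin n, star (ψ (a * f i) • star (f i))
          = (f.repr (star a) i) • f i := by
        intro i
        rw [star_smul, star_star, ← coord_eq ψ f horth (star a) i]
        congr 1
        rw [show star (ψ (a * f i)) = (starRingEnd ℂ) (ψ (a * f i)) from rfl,
          ← psi_star ψ hψ (a * f i), star_mul]
      rw [Finset.sum_congr rfl fun i _ => heach i]
      exact f.sum_repr (star a)
    have hkey : (∑ i, ψ (a * f i) * ψ (b * (star (f i) * x)))
        = ψ (b * ((∑ i, ψ (a * f i) • star (f i)) * x)) := by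
      rw [Finset.sum_mul, Finset.mul_sum, map_sum]
      refine Finset.sum_congr rfl fun i _ => ?_
      rw [smul_mul_assoc, mul_smul_comm, map_smul, smul_eq_mul]
    rw [hkey, hsa, ← mul_assoc, sub_self]
  have h0 := tensor_nondeg ψ hψ f horth _ hsub
  exact sub_eq_zero.mp h0

lemma mstar_left (ψ : B →ₗ[ℂ] ℂ) (hψ : IsState ψ)
    (mstar : B →ₗ[ℂ] B ⊗[ℂ] B) (hadj : IsAdjointMul ψ mstar)
    {n : ℕ} (f : Module.Basis (Fin n) ℂ B)
    (horth : ∀ i j, ψ (star (f i) * f j) = if i = j then 1 else 0) (y : B) :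
    (y ⊗ₜ[ℂ] (1 : B)) * mstar 1 = mstar y := by
  have hsub : ∀ a b : B,
      psi2 ψ ((a ⊗ₜ[ℂ] b) * ((y ⊗ₜ[ℂ] (1 : B)) * mstar 1 - mstar y)) = 0 := by
    intro a b
    rw [mul_sub, map_sub, ← mul_assoc, Algebra.TensorProduct.tmul_mul_tmul, mul_one,
      mstar_pair ψ mstar hadj, mstar_pair ψ mstar hadj, mul_one, ← mul_assoc, sub_self]
  have h0 := tensor_nondeg ψ hψ f horth _ hsub
  exact sub_eq_zero.mp h0

lemma mstar_right (ψ : B →ₗ[ℂ] ℂ) (hψ : IsState ψ)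
    (mstar : B →ₗ[ℂ] B ⊗[ℂ] B) (hadj : IsAdjointMul ψ mstar)
    {n : ℕ} (f : Module.Basis (Fin n) ℂ B)
    (horth : ∀ i j, ψ (star (f i) * f j) = if i = j then 1 else 0) (y : B) :
    mstar 1 * ((1 : B) ⊗ₜ[ℂ] y) = mstar y := by
  rw [mstar_formula ψ hψ mstar hadj f horth 1, mstar_formula ψ hψ mstar hadj f horth y,
    Finset.sum_mul]
  exact Finset.sum_congr rfl fun i _ => by
    rw [Algebra.TensorProduct.tmul_mul_tmul]; simp

lemma lTensor_left_mul (A : B →ₗ[ℂ] B) (y : B) (ξ : B ⊗[ℂ] B) :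
    (y ⊗ₜ[ℂ] (1 : B)) * (LinearMap.lTensor B A ξ)
      = LinearMap.lTensor B A ((y ⊗ₜ[ℂ] (1 : B)) * ξ) := by
  induction ξ using TensorProduct.induction_on with
  | zero => simp
  | tmul a b => simp [Algebra.TensorProduct.tmul_mul_tmul]
  | add u v hu hv => simp only [map_add, mul_add, hu, hv]

lemma lTensor_right_mul (A : B →ₗ[ℂ] B) (hhom : ∀ x y, A (x * y) = A x * A y)
    (y : B) (ξ : B ⊗[ℂ] B) :
    LinearMap.lTensor B A (ξ * ((1 : B) ⊗ₜ[ℂ] y))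
      = (LinearMap.lTensor B A ξ) * ((1 : B) ⊗ₜ[ℂ] A y) := by
  induction ξ using TensorProduct.induction_on with
  | zero => simp
  | tmul a b => simp [Algebra.TensorProduct.tmul_mul_tmul, hhom]
  | add u v hu hv => simp only [map_add, add_mul, hu, hv]

end helpers


/-- If the completely positive quantum adjacency matrix `A` is a homomorphism, then
`(xy)·ε_G = x·ε_G·A(y)`. -/
theorem stmt_11 {B : Type*} [Ring B] [StarRing B] [Algebra ℂ B] [StarModule ℂ B]
    [Module.Finite ℂ B] [Module.Free ℂ B]
    (ψ : B →ₗ[ℂ] ℂ) (hψ : IsState ψ)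
    (mstar : B →ₗ[ℂ] B ⊗[ℂ] B) (hadj : IsAdjointMul ψ mstar)
    (δ : ℝ) (hδ : 0 < δ) (hdelta : IsDeltaForm mstar δ)
    (A : B →ₗ[ℂ] B) (hA : IsQAdj mstar δ A) (hcp : IsCP A)
    (hhom : ∀ x y, A (x * y) = A x * A y) :
    ∀ x y : B,
      ((x * y) ⊗ₜ[ℂ] (1 : B)) * edgeInd mstar δ A =
        ((x ⊗ₜ[ℂ] (1 : B)) * edgeInd mstar δ A) * ((1 : B) ⊗ₜ[ℂ] A y) := by
  obtain ⟨n, f, horth⟩ := exists_onb ψ hψ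
  intro x y
  have key : (y ⊗ₜ[ℂ] (1 : B)) * (LinearMap.lTensor B A (mstar 1))
      = (LinearMap.lTensor B A (mstar 1)) * ((1 : B) ⊗ₜ[ℂ] A y) := by
    rw [lTensor_left_mul, mstar_left ψ hψ mstar hadj f horth y,
      ← mstar_right ψ hψ mstar hadj f horth y, lTensor_right_mul A hhom]
  unfold edgeInd
  rw [mul_smul_comm, mul_smul_comm, smul_mul_assoc]
  congr 1
  have hxy : ((x * y) ⊗ₜ[ℂ] (1 : B)) = (x ⊗ₜ[ℂ] (1 : B)) * (y ⊗ₜ[ℂ] (1 : B)) := by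
    rw [Algebra.TensorProduct.tmul_mul_tmul, mul_one]
  rw [hxy, mul_assoc, key, ← mul_assoc]


end
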